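/- Let N ≥ 1, let a, b be real numbers and let v, w be vectors in ℝ^N. Let M be the (N+1)×(N+1) real matrix given in block form by M = [[a·I_N, v], [wᵀ, b]], where I_N is the N×N identity matrix. Then the characteristic polynomial of M factors as χ_M(X) = (X − a)^{N−1} · ((X − a)(X − b) − wᵀv). -/

import Mathlib

open Polynomial

/-- The `(N+1) × (N+1)` arrowhead matrix with upper-left block `a • I_N`,
last column `v`, last row `wᵀ`, and bottom-right entry `b`. -/
def arrowhead (N : ℕ) (a b : ℝ) (v w : Fin N → ℝ) :
    Matrix (Fin N ⊕ Unit) (Fin N ⊕ Unit) ℝ :=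
  Matrix.of fun i j =>
    match i, j with
    | Sum.inl i, Sum.inl j => if i = j then a else 0
    | Sum.inl i, Sum.inr _ => v i
    | Sum.inr _, Sum.inl j => w j
    | Sum.inr _, Sum.inr _ => b

theorem arrowhead_charpoly (N : ℕ) (hN : 1 ≤ N) (a b : ℝ) (v w : Fin N → ℝ) :
    (arrowhead N a b v w).charpoly =
      (X - C a) ^ (N - 1) *
        ((X - C a) * (X - C b) - C (∑ j, w j * v j)) := by
  classical
  have hchar : Matrix.charmatrix (arrowhead N a b v w) =
      Matrix.fromBlocks ((X - Polynomial.C a) • (1 : Matrix (Fin N) (Fin N) ℝ[X]))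
        (Matrix.of fun i (_ : Unit) => -Polynomial.C (v i))
        (Matrix.of fun (_ : Unit) j => -Polynomial.C (w j))
        (Matrix.of fun (_ : Unit) (_ : Unit) => X - Polynomial.C b) := by
    ext i j
    rcases i with i | i <;> rcases j with j | j
    · by_cases h : i = j
      · subst h; simp [Matrix.charmatrix_apply, arrowhead, Matrix.one_apply]
      · simp [Matrix.charmatrix_apply, arrowhead, Matrix.one_apply, h,
          Matrix.diagonal_apply_ne _ (show (Sum.inl i : Fin N ⊕ Unit) ≠ Sum.inl j by simpa using h)]
    · simp [Matrix.charmatrix_apply, arrowhead,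
        Matrix.diagonal_apply_ne _ (show (Sum.inl i : Fin N ⊕ Unit) ≠ Sum.inr j by simp)]
    · simp [Matrix.charmatrix_apply, arrowhead,
        Matrix.diagonal_apply_ne _ (show (Sum.inr i : Fin N ⊕ Unit) ≠ Sum.inl j by simp)]
    · simp [Matrix.charmatrix_apply, arrowhead]
  rw [Matrix.charpoly, hchar]
  -- move to the fraction field
  set K := FractionRing ℝ[X]
  have hinj : Function.Injective (algebraMap ℝ[X] K) := IsFractionRing.injective _ _
  apply hinj
  set f : ℝ[X] →+* K := algebraMap ℝ[X] K with hf
  have hXa : (X - Polynomial.C a : ℝ[X]) ≠ 0 := X_sub_C_ne_zero a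
  set α : K := f (X - Polynomial.C a) with hα
  have hα0 : α ≠ 0 := fun h => hXa (hinj (h.trans (map_zero f).symm))
  rw [RingHom.map_det, RingHom.mapMatrix_apply, Matrix.fromBlocks_map]
  have hA : ((X - Polynomial.C a : ℝ[X]) • (1 : Matrix (Fin N) (Fin N) ℝ[X])).map f
      = α • (1 : Matrix (Fin N) (Fin N) K) := by
    ext i j; by_cases h : i = j <;> simp [Matrix.one_apply, h, Matrix.map_apply, hα, map_sub]
  rw [hA]
  haveI : Invertible (α • (1 : Matrix (Fin N) (Fin N) K)) :=
    (α • (1 : Matrix (Fin N) (Fin N) K)).invertibleOfIsUnitDet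
      (by rw [Matrix.det_smul, Matrix.det_one, mul_one]; exact (pow_ne_zero _ hα0).isUnit)
  rw [Matrix.det_fromBlocks₁₁]
  have hinv : ⅟(α • (1 : Matrix (Fin N) (Fin N) K)) = α⁻¹ • 1 := by
    apply invOf_eq_right_inv
    rw [smul_mul_smul_comm, one_mul, mul_inv_cancel₀ hα0, one_smul]
  rw [hinv]
  have hdet1 : Matrix.det (α • (1 : Matrix (Fin N) (Fin N) K)) = α ^ N := by
    simp [Matrix.det_smul]
  rw [hdet1, Matrix.det_unique]
  simp only [Matrix.sub_apply, Matrix.mul_apply, Matrix.smul_apply, Matrix.one_apply,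
    Matrix.map_apply, Matrix.of_apply, Finset.sum_ite_eq, smul_eq_mul]
  simp only [mul_ite, mul_one, mul_zero, Finset.sum_ite_eq', Finset.mem_univ, if_true]
  have hC : f (Polynomial.C (∑ j, w j * v j)) = ∑ j, f (Polynomial.C (w j)) * f (Polynomial.C (v j)) := by
    rw [map_sum, map_sum]
    exact Finset.sum_congr rfl fun x _ => by rw [Polynomial.C_mul, _root_.map_mul]
  have hRHS : f ((X - Polynomial.C a) ^ (N - 1) *
      ((X - Polynomial.C a) * (X - Polynomial.C b) - Polynomial.C (∑ j, w j * v j)))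
      = α ^ (N - 1) * (α * f (X - Polynomial.C b)
          - ∑ j, f (Polynomial.C (w j)) * f (Polynomial.C (v j))) := by
    rw [_root_.map_mul, map_pow, ← hα, _root_.map_sub, _root_.map_mul, ← hα, hC]
  have hLHS : (∑ x, f (-Polynomial.C (w x)) * α⁻¹ * f (-Polynomial.C (v x)))
      = α⁻¹ * ∑ j, f (Polynomial.C (w j)) * f (Polynomial.C (v j)) := by
    rw [Finset.mul_sum]
    refine Finset.sum_congr rfl fun x _ => ?_
    rw [map_neg, map_neg]; ring
  have hNpow : α ^ N = α ^ (N - 1) * α := by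
    conv_lhs => rw [← Nat.sub_add_cancel hN]
    rw [pow_succ]
  rw [hLHS, hRHS, hNpow]
  rw [mul_sub (α ^ (N - 1) * α), ← mul_assoc (α ^ (N - 1) * α) α⁻¹, mul_inv_cancel_right₀ hα0]
  ring
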